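/- For all integers m ≥ 1 and n ≥ 0, the following identity holds in ℤ[q]: Σ_{k=0}^{n} (−q)^{n−k} · (Π_{j=1}^{k} [jm]_q) · h_{n−k}([m−1]_q, [2m−1]_q, …, [(k+1)m−1]_q) = 1. (The k-th summand is (−q)^{n−k} times the ordered super q-Stirling number S̃^o[m,n,k] = [km]!_m · h_{n−k}([m−1]_q,…,[(k+1)m−1]_q).) -/
import Mathlib


open Finset

/-- Complete homogeneous symmetric polynomial evaluated at a list of ring elements. -/
def hpoly {R : Type*} [CommSemiring R] : ℕ → List R → R
  | 0, _ => 1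
  | _ + 1, [] => 0
  | j + 1, a :: l => hpoly (j + 1) l + a * hpoly j (a :: l)
  termination_by j l => (j, l.length)

/-- The q-integer `[l]_q = 1 + q + … + q^{l-1}` in `ℤ[q]`. -/
noncomputable def qint (l : ℕ) : Polynomial ℤ := ∑ i ∈ range l, Polynomial.X ^ i

lemma hpoly_zero {R : Type*} [CommSemiring R] (l : List R) : hpoly 0 l = 1 := by
  simp [hpoly]

lemma hpoly_nil {R : Type*} [CommSemiring R] (j : ℕ) : hpoly (R := R) (j + 1) [] = 0 := by
  simp [hpoly]

lemma hpoly_cons {R : Type*} [CommSemiring R] (j : ℕ) (a : R) (l : List R) :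
    hpoly (j + 1) (a :: l) = hpoly (j + 1) l + a * hpoly j (a :: l) := by
  rw [hpoly]

lemma hpoly_aux {R : Type*} [CommRing R] (j : ℕ) :
    (∀ (l : List R) (a : R),
      hpoly (j + 1) (l ++ [a]) = hpoly (j + 1) l + a * hpoly j (l ++ [a])) ∧
    (∀ (l : List R) (a b : R),
      hpoly (j + 1) (l ++ [a]) + b * hpoly j (b :: (l ++ [a]))
        = hpoly (j + 1) (b :: l) + a * hpoly j (b :: (l ++ [a]))) := by
  induction j with
  | zero =>
    have P0 : ∀ (l : List R) (a : R),
        hpoly 1 (l ++ [a]) = hpoly 1 l + a * hpoly 0 (l ++ [a]) := by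
      intro l a
      induction l with
      | nil => simp [hpoly]
      | cons b l ih =>
        rw [List.cons_append, hpoly_cons, ih, hpoly_cons, hpoly_zero, hpoly_zero, hpoly_zero]
        ring
    refine ⟨P0, fun l a b => ?_⟩
    rw [P0 l a, hpoly_cons, hpoly_zero, hpoly_zero, hpoly_zero]
    ring
  | succ j ih =>
    obtain ⟨P, Q⟩ := ih
    have P1 : ∀ (l : List R) (a : R),
        hpoly (j + 2) (l ++ [a]) = hpoly (j + 2) l + a * hpoly (j + 1) (l ++ [a]) := by
      intro l a
      induction l with
      | nil => simp [hpoly]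
      | cons b l ihl =>
        rw [List.cons_append, hpoly_cons, ihl, hpoly_cons (j + 1) b l]
        have hH := P (b :: l) a
        rw [List.cons_append] at hH
        have hQ := Q l a b
        linear_combination a * hQ + (b - a) * hH
    refine ⟨P1, fun l a b => ?_⟩
    have h1 := P1 l a
    have h2 := P (b :: l) a
    rw [List.cons_append] at h2
    have h3 := hpoly_cons (j + 1) b l
    have hQ := Q l a b
    linear_combination h1 + (b - a) * h2 - h3 + a * hQ

lemma hpoly_append {R : Type*} [CommRing R] (j : ℕ) (l : List R) (a : R) :
    hpoly (j + 1) (l ++ [a]) = hpoly (j + 1) l + a * hpoly j (l ++ [a]) :=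
  (hpoly_aux j).1 l a

lemma qint_succ (l : ℕ) : qint (l + 1) = 1 + Polynomial.X * qint l := by
  simp [qint, Finset.sum_range_succ', Finset.mul_sum, pow_succ, mul_comm, add_comm]

/-- in `ℤ[q]`,
`Σ_{k=0}^{n} (−q)^{n−k} · (Π_{j=1}^{k} [jm]_q) · h_{n−k}([m−1]_q, [2m−1]_q, …, [(k+1)m−1]_q) = 1`,
i.e. the alternating sum of the ordered super q-Stirling numbers `S̃^o[m,n,k]` is `1`. -/
theorem stmt8 (m n : ℕ) (hm : 1 ≤ m) :
    ∑ k ∈ range (n + 1),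
        (-(Polynomial.X : Polynomial ℤ)) ^ (n - k) *
          ((∏ j ∈ range k, qint ((j + 1) * m)) *
            hpoly (n - k) ((List.range (k + 1)).map fun j => qint ((j + 1) * m - 1))) = 1 := by
  induction n with
  | zero => simp [hpoly_zero]
  | succ n ih =>
    set f : ℕ → Polynomial ℤ := fun j => qint ((j + 1) * m - 1) with hf
    set A : ℕ → Polynomial ℤ := fun k =>
      (-(Polynomial.X : Polynomial ℤ)) ^ (n + 1 - k) *
        ((∏ j ∈ range k, qint ((j + 1) * m)) *
          hpoly (n + 1 - k) ((List.range k).map f)) with hA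
    have hX : ∀ k : ℕ, Polynomial.X * qint ((k + 1) * m - 1) = qint ((k + 1) * m) - 1 := by
      intro k
      have h1 : (k + 1) * m - 1 + 1 = (k + 1) * m :=
        Nat.sub_add_cancel (Nat.one_le_iff_ne_zero.mpr (by positivity))
      have := qint_succ ((k + 1) * m - 1)
      rw [h1] at this
      rw [this]; ring
    have key : ∀ k ∈ range (n + 1),
        (-(Polynomial.X : Polynomial ℤ)) ^ (n + 1 - k) *
          ((∏ j ∈ range k, qint ((j + 1) * m)) *
            hpoly (n + 1 - k) ((List.range (k + 1)).map f))
        = (A k - A (k + 1)) +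
          (-(Polynomial.X : Polynomial ℤ)) ^ (n - k) *
            ((∏ j ∈ range k, qint ((j + 1) * m)) *
              hpoly (n - k) ((List.range (k + 1)).map f)) := by
      intro k hk
      rw [Finset.mem_range] at hk
      have hk' : k ≤ n := Nat.lt_succ_iff.mp hk
      have hsub : n + 1 - k = (n - k) + 1 := by omega
      have hsub2 : n + 1 - (k + 1) = n - k := by omega
      have hrange : List.range (k + 1) = List.range k ++ [k] := by rw [List.range_succ]
      simp only [hA, hsub, hsub2, hrange, List.map_append, List.map_cons, List.map_nil,
        Finset.prod_range_succ]
      rw [hpoly_append]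
      have hx := hX k
      rw [hf]
      simp only []
      rw [pow_succ]
      linear_combination
        (-((-(Polynomial.X : Polynomial ℤ)) ^ (n - k) *
          ((∏ j ∈ range k, qint ((j + 1) * m)) *
            hpoly (n - k) (List.map f (List.range k) ++ [f k])))) * hx
    rw [Finset.sum_range_succ, Finset.sum_congr rfl key, Finset.sum_add_distrib,
      Finset.sum_range_sub' A, ih]
    have hA0 : A 0 = 0 := by
      simp [hA, hpoly_nil]
    have hAn : A (n + 1) = ∏ j ∈ range (n + 1), qint ((j + 1) * m) := by
      simp [hA, hpoly_zero]
    rw [hA0, hAn]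
    simp [hpoly_zero]
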